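/- With Π̂^{mat}(s) as defined from the zero-temperature quark loop (ζ > ξ > 0), one has Π̂^{mat}(s) = O(s) as s → +∞; i.e., there exist C, s₀ > 0 with |Π̂^{mat}(s)| ≤ C·s for all s ≥ s₀. -/

import Mathlib

open Filter Topology

/-- The zero-temperature quark matter polarization `Π̂^{mat}(s)` in the
long-wavelength limit, for chemical potential exceeding quark mass (ζ > ξ > 0). -/
noncomputable def quarkMatterPol (c ζ ξ : ℝ) (s : ℝ) : ℝ :=
  c * (4 * Real.sqrt (ζ * (ζ - ξ))
    + 2 * s * Real.log (Real.sqrt ξ / (Real.sqrt ζ + Real.sqrt (ζ - ξ)))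
    + (Real.sqrt s)⁻¹ * (2 * ξ - s) * Real.sqrt (s + 4 * ξ) *
        Real.log ((Real.sqrt (ζ * (s + 4 * ξ)) - Real.sqrt (s * (ζ - ξ))) /
                  (Real.sqrt (ζ * (s + 4 * ξ)) + Real.sqrt (s * (ζ - ξ)))))

lemma log_ratio_bound (ζ ξ s : ℝ) (hξ : 0 < ξ) (hζξ : ξ < ζ) (hs : 0 < s) :
    |Real.log ((Real.sqrt (ζ * (s + 4 * ξ)) - Real.sqrt (s * (ζ - ξ))) /
      (Real.sqrt (ζ * (s + 4 * ξ)) + Real.sqrt (s * (ζ - ξ))))| ≤ Real.log (8 * ζ / ξ) := by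
  set a := Real.sqrt (ζ * (s + 4 * ξ)) with ha
  set b := Real.sqrt (s * (ζ - ξ)) with hb
  have hζ : 0 < ζ := hξ.trans hζξ
  have ha2 : a ^ 2 = ζ * (s + 4 * ξ) := Real.sq_sqrt (by positivity)
  have hb2 : b ^ 2 = s * (ζ - ξ) := Real.sq_sqrt (by nlinarith)
  have hb0 : 0 ≤ b := Real.sqrt_nonneg _
  have hba : b < a := by
    apply Real.sqrt_lt_sqrt (by nlinarith)
    nlinarith
  have ha0 : 0 < a := lt_of_le_of_lt hb0 hba
  have hden : 0 < a + b := by linarith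
  have hr0 : 0 < (a - b) / (a + b) := by
    apply div_pos (by linarith) hden
  have hr1 : (a - b) / (a + b) ≤ 1 := by
    rw [div_le_one hden]; linarith
  have hlow : ξ / (8 * ζ) ≤ (a - b) / (a + b) := by
    rw [div_le_div_iff₀ (by positivity) hden]
    have hkey : ξ * (a + b) ^ 2 ≤ 8 * ζ * (a ^ 2 - b ^ 2) := by
      nlinarith [mul_nonneg hξ.le (sq_nonneg (a - b)),
        mul_pos (mul_pos hs hζ) hξ, mul_pos hs (mul_pos hξ hξ),
        mul_pos (mul_pos hζ hξ) (sub_pos.mpr hζξ),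
        mul_pos (mul_pos hζ hζ) hξ]
    nlinarith [hkey, mul_pos hden hden]
  have hξζ : ξ / (8 * ζ) < 1 := by
    rw [div_lt_one (by positivity)]; nlinarith
  have h1 : Real.log ((a - b) / (a + b)) ≤ 0 := Real.log_nonpos hr0.le hr1
  have h2 : Real.log (ξ / (8 * ζ)) ≤ Real.log ((a - b) / (a + b)) :=
    Real.log_le_log (by positivity) hlow
  have h3 : Real.log (ξ / (8 * ζ)) = - Real.log (8 * ζ / ξ) := by
    rw [← Real.log_inv, inv_div]
  rw [abs_of_nonpos h1]
  linarith [h3 ▸ h2]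

/-- UV behavior of the quark matter polarization: `Π̂^{mat}(s) = O(s)` as `s → +∞`. -/
theorem quarkMatterPol_bigO_atTop (c ζ ξ : ℝ) (hc : 0 < c) (hξ : 0 < ξ) (hζξ : ξ < ζ) :
    ∃ C s₀ : ℝ, 0 < C ∧ 0 < s₀ ∧ ∀ s : ℝ, s₀ ≤ s → |quarkMatterPol c ζ ξ s| ≤ C * s := by
  have hζ : 0 < ζ := hξ.trans hζξ
  set L := Real.log (8 * ζ / ξ) with hL
  have hLpos : 0 < L := Real.log_pos (by rw [lt_div_iff₀ hξ]; nlinarith)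
  set K := |Real.log (Real.sqrt ξ / (Real.sqrt ζ + Real.sqrt (ζ - ξ)))| with hK
  refine ⟨c * (4 * Real.sqrt (ζ * (ζ - ξ)) + 2 * K + Real.sqrt 2 * L + 1),
    4 * (ξ + ζ) + 1, by positivity, by positivity, fun s hs => ?_⟩
  have hs1 : 1 ≤ s := by nlinarith
  have hs0 : 0 < s := by linarith
  have hs4ξ : 4 * ξ ≤ s := by nlinarith
  have hss : 0 < Real.sqrt s := Real.sqrt_pos.mpr hs0
  -- bound each term
  have hT1 : |4 * Real.sqrt (ζ * (ζ - ξ))| ≤ 4 * Real.sqrt (ζ * (ζ - ξ)) * s := by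
    rw [abs_of_nonneg (by positivity)]
    nlinarith [Real.sqrt_nonneg (ζ * (ζ - ξ))]
  have hT2 : |2 * s * Real.log (Real.sqrt ξ / (Real.sqrt ζ + Real.sqrt (ζ - ξ)))|
      ≤ 2 * K * s := by
    rw [abs_mul, abs_of_nonneg (by positivity : (0:ℝ) ≤ 2 * s)]
    rw [← hK]; ring_nf; nlinarith [abs_nonneg (Real.log (Real.sqrt ξ / (Real.sqrt ζ + Real.sqrt (ζ - ξ))))]
  have hT3 : |(Real.sqrt s)⁻¹ * (2 * ξ - s) * Real.sqrt (s + 4 * ξ) *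
        Real.log ((Real.sqrt (ζ * (s + 4 * ξ)) - Real.sqrt (s * (ζ - ξ))) /
                  (Real.sqrt (ζ * (s + 4 * ξ)) + Real.sqrt (s * (ζ - ξ))))|
      ≤ Real.sqrt 2 * L * s := by
    have hlog := log_ratio_bound ζ ξ s hξ hζξ hs0
    have h2ξ : |2 * ξ - s| ≤ s := by
      rw [abs_le]; constructor <;> nlinarith
    have hsq : Real.sqrt (s + 4 * ξ) ≤ Real.sqrt 2 * Real.sqrt s := by
      rw [← Real.sqrt_mul (by norm_num)]
      exact Real.sqrt_le_sqrt (by nlinarith)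
    rw [abs_mul, abs_mul, abs_mul]
    rw [abs_of_nonneg (by positivity : (0:ℝ) ≤ (Real.sqrt s)⁻¹),
        abs_of_nonneg (Real.sqrt_nonneg (s + 4 * ξ))]
    calc (Real.sqrt s)⁻¹ * |2 * ξ - s| * Real.sqrt (s + 4 * ξ) * |_|
        ≤ (Real.sqrt s)⁻¹ * s * (Real.sqrt 2 * Real.sqrt s) * L := by
          apply mul_le_mul _ hlog (abs_nonneg _) (by positivity)
          apply mul_le_mul _ hsq (Real.sqrt_nonneg _) (by positivity)
          exact mul_le_mul_of_nonneg_left h2ξ (by positivity)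
      _ = Real.sqrt 2 * L * s := by
          field_simp
  -- combine
  unfold quarkMatterPol
  rw [abs_mul, abs_of_pos hc]
  have := abs_add_le (4 * Real.sqrt (ζ * (ζ - ξ))
    + 2 * s * Real.log (Real.sqrt ξ / (Real.sqrt ζ + Real.sqrt (ζ - ξ))))
    ((Real.sqrt s)⁻¹ * (2 * ξ - s) * Real.sqrt (s + 4 * ξ) *
        Real.log ((Real.sqrt (ζ * (s + 4 * ξ)) - Real.sqrt (s * (ζ - ξ))) /
                  (Real.sqrt (ζ * (s + 4 * ξ)) + Real.sqrt (s * (ζ - ξ)))))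
  have htri := abs_add_le (4 * Real.sqrt (ζ * (ζ - ξ)))
    (2 * s * Real.log (Real.sqrt ξ / (Real.sqrt ζ + Real.sqrt (ζ - ξ))))
  have hsum : |4 * Real.sqrt (ζ * (ζ - ξ))
    + 2 * s * Real.log (Real.sqrt ξ / (Real.sqrt ζ + Real.sqrt (ζ - ξ)))
    + (Real.sqrt s)⁻¹ * (2 * ξ - s) * Real.sqrt (s + 4 * ξ) *
        Real.log ((Real.sqrt (ζ * (s + 4 * ξ)) - Real.sqrt (s * (ζ - ξ))) /
                  (Real.sqrt (ζ * (s + 4 * ξ)) + Real.sqrt (s * (ζ - ξ))))|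
      ≤ (4 * Real.sqrt (ζ * (ζ - ξ)) + 2 * K + Real.sqrt 2 * L + 1) * s := by
    nlinarith [this, htri, hT1, hT2, hT3]
  calc c * |_| ≤ c * ((4 * Real.sqrt (ζ * (ζ - ξ)) + 2 * K + Real.sqrt 2 * L + 1) * s) :=
        mul_le_mul_of_nonneg_left hsum hc.le
    _ = c * (4 * Real.sqrt (ζ * (ζ - ξ)) + 2 * K + Real.sqrt 2 * L + 1) * s := by ring
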